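/- arXiv:2509.11160 — 3 statements merged into one kernel-verified Lean document; each statement's English description precedes it below -/
import Mathlib

section
/- Let B : ℝ³ → ℝ³ be a smooth vector field, and for smooth functions f, g : ℝ³ × ℝ³ → ℝ define the magnetized bracket {f, g}(x, v) = ∇ₓf · ∇ᵥg − ∇ᵥf · ∇ₓg + B(x) · (∇ᵥf × ∇ᵥg). Then for all smooth f, g, h, the cyclic Jacobi sum {{f, g}, h} + {{g, h}, f} + {{h, f}, g} equals, at every point (x, v), (div B)(x) · (∇ᵥf · (∇ᵥg × ∇ᵥh))(x, v). -/
open scoped BigOperators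
open MeasureTheory

noncomputable section

/-- Vectors in ℝ³. -/
abbrev V3 : Type := Fin 3 → ℝ

/-- Euclidean inner product on ℝ³. -/
def dot3 (a b : V3) : ℝ := ∑ i, a i * b i

/-- Cross product on ℝ³. -/
def cross3 (a b : V3) : V3 := crossProduct a b

/-- Partial derivative in direction `i`. -/
def pd (i : Fin 3) (f : V3 → ℝ) (x : V3) : ℝ := fderiv ℝ f x (Pi.single i 1)

/-- Gradient on ℝ³. -/
def grad3 (f : V3 → ℝ) (x : V3) : V3 := fun i => pd i f x

/-- Divergence of a vector field on ℝ³. -/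
def div3 (X : V3 → V3) (x : V3) : ℝ := ∑ i, pd i (fun y => X y i) x

/-- Curl of a vector field on ℝ³. -/
def curl3 (X : V3 → V3) (x : V3) : V3 :=
  ![pd 1 (fun y => X y 2) x - pd 2 (fun y => X y 1) x,
    pd 2 (fun y => X y 0) x - pd 0 (fun y => X y 2) x,
    pd 0 (fun y => X y 1) x - pd 1 (fun y => X y 0) x]

/-- Gradient in the position variable of a phase-space function. -/
def gradx (f : V3 × V3 → ℝ) (p : V3 × V3) : V3 :=
  fun i => fderiv ℝ f p (Pi.single i 1, 0)

/-- Gradient in the velocity (or momentum) variable of a phase-space function. -/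
def gradv (f : V3 × V3 → ℝ) (p : V3 × V3) : V3 :=
  fun i => fderiv ℝ f p (0, Pi.single i 1)

/-- Canonical phase-space bracket `∇ₓf · ∇ᵥg − ∇ᵥf · ∇ₓg`. -/
def pb (f g : V3 × V3 → ℝ) (p : V3 × V3) : ℝ :=
  dot3 (gradx f p) (gradv g p) - dot3 (gradv f p) (gradx g p)

/-- Magnetized bracket `{f,g} = ∇ₓf·∇ᵥg − ∇ᵥf·∇ₓg + B(x)·(∇ᵥf × ∇ᵥg)`. -/
def mb (B : V3 → V3) (f g : V3 × V3 → ℝ) (p : V3 × V3) : ℝ :=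
  pb f g p + dot3 (B p.1) (cross3 (gradv f p) (gradv g p))

def ex (i : Fin 3) : V3 × V3 := (Pi.single i 1, 0)
def ev (i : Fin 3) : V3 × V3 := (0, Pi.single i 1)

theorem contDiff_dfa {f : V3 × V3 → ℝ} (hf : ContDiff ℝ (⊤ : ℕ∞) f) (w : V3 × V3) :
    ContDiff ℝ (⊤ : ℕ∞) (fun q => fderiv ℝ f q w) :=
  (hf.fderiv_right (m := (⊤:ℕ∞)) (by exact_mod_cast le_top)).clm_apply contDiff_const

theorem D2_symm {f : V3 × V3 → ℝ} (hf : ContDiff ℝ (⊤ : ℕ∞) f) (p u w : V3 × V3) :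
    fderiv ℝ (fun q => fderiv ℝ f q w) p u = fderiv ℝ (fun q => fderiv ℝ f q u) p w := by
  have hd : DifferentiableAt ℝ (fderiv ℝ f) p :=
    ((hf.fderiv_right (m := (⊤:ℕ∞)) (by exact_mod_cast le_top)).differentiable (by simp)).differentiableAt
  have key : ∀ a b : V3 × V3, fderiv ℝ (fun q => fderiv ℝ f q b) p a
      = fderiv ℝ (fderiv ℝ f) p a b := by
    intro a b
    rw [fderiv_clm_apply hd (differentiableAt_const b)]
    simp
  rw [key, key]
  exact second_derivative_symmetric (fun y => (hf.differentiable (by simp) y).hasFDerivAt)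
    hd.hasFDerivAt u w

theorem dB_dir (B : V3 → V3) (hB : ContDiff ℝ (⊤ : ℕ∞) B) (j : Fin 3) (p u : V3 × V3) :
    fderiv ℝ (fun q : V3 × V3 => B q.1 j) p u = fderiv ℝ (fun y => B y j) p.1 u.1 := by
  have hBj : ContDiff ℝ (⊤ : ℕ∞) (fun y => B y j) := contDiff_pi.mp hB j
  have h1 : HasFDerivAt (fun q : V3 × V3 => B q.1 j)
      ((fderiv ℝ (fun y => B y j) p.1).comp (ContinuousLinearMap.fst ℝ V3 V3)) p :=
    HasFDerivAt.comp p ((hBj.differentiable (by simp)) p.1).hasFDerivAt hasFDerivAt_fst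
  rw [h1.fderiv]; rfl

theorem dB_ev (B : V3 → V3) (hB : ContDiff ℝ (⊤ : ℕ∞) B) (j i : Fin 3) (p : V3 × V3) :
    fderiv ℝ (fun q : V3 × V3 => B q.1 j) p (ev i) = 0 := by
  rw [dB_dir B hB j p (ev i)]; simp [ev]

theorem dB_ex (B : V3 → V3) (hB : ContDiff ℝ (⊤ : ℕ∞) B) (j i : Fin 3) (p : V3 × V3) :
    fderiv ℝ (fun q : V3 × V3 => B q.1 j) p (ex i) = pd i (fun y => B y j) p.1 := by
  rw [dB_dir B hB j p (ex i)]; rfl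

theorem gradv_eq (f : V3 × V3 → ℝ) (p : V3 × V3) (i : Fin 3) :
    gradv f p i = fderiv ℝ f p (ev i) := rfl

theorem gradx_eq (f : V3 × V3 → ℝ) (p : V3 × V3) (i : Fin 3) :
    gradx f p i = fderiv ℝ f p (ex i) := rfl


theorem mb_eq (B : V3 → V3) (f g : V3 × V3 → ℝ) : mb B f g = fun q =>
    fderiv ℝ f q (ex 0) * fderiv ℝ g q (ev 0) + fderiv ℝ f q (ex 1) * fderiv ℝ g q (ev 1) + fderiv ℝ f q (ex 2) * fderiv ℝ g q (ev 2) - (fderiv ℝ f q (ev 0) * fderiv ℝ g q (ex 0) + fderiv ℝ f q (ev 1) * fderiv ℝ g q (ex 1) + fderiv ℝ f q (ev 2) * fderiv ℝ g q (ex 2)) + (B q.1 0 * (fderiv ℝ f q (ev 1) * fderiv ℝ g q (ev 2) - fderiv ℝ f q (ev 2) * fderiv ℝ g q (ev 1)) + B q.1 1 * (fderiv ℝ f q (ev 2) * fderiv ℝ g q (ev 0) - fderiv ℝ f q (ev 0) * fderiv ℝ g q (ev 2)) + B q.1 2 * (fderiv ℝ f q (ev 0) * fderiv ℝ g q (ev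 1) - fderiv ℝ f q (ev 1) * fderiv ℝ g q (ev 0))) := by
  funext q
  simp [mb, pb, dot3, cross3, gradx, gradv, cross_apply, Fin.sum_univ_three, ex, ev]

theorem fderiv_mb (B : V3 → V3) (f g : V3 × V3 → ℝ) (hB : ContDiff ℝ (⊤ : ℕ∞) B)
    (hf : ContDiff ℝ (⊤ : ℕ∞) f) (hg : ContDiff ℝ (⊤ : ℕ∞) g) (p : V3 × V3) : ∀ u,
    fderiv ℝ (mb B f g) p u =
    fderiv ℝ (fun q => fderiv ℝ f q (ex 0)) p (u) * fderiv ℝ g p (ev 0) + fderiv ℝ f p (ex 0) * fderiv ℝ (fun q => fderiv ℝ g q (ev 0)) p (u) + fderiv ℝ (fun q => fderiv ℝ f q (ex 1)) p (u) * fderiv ℝ g p (ev 1) + fderiv ℝ f p (ex 1) * fderiv ℝ (fun q => fderiv ℝ g q (ev 1)) p (u) + fderiv ℝ (fun q => fderiv ℝ f q (ex 2)) p (u) * fderiv ℝ g p (ev 2) + fderiv ℝ f p (ex 2) * fderiv ℝ (fun q => fderiv ℝ g q (ev 2)) p (u) - (fderiv ℝ (fun q => fderiv ℝ f q (ev 0))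 p (u) * fderiv ℝ g p (ex 0) + fderiv ℝ f p (ev 0) * fderiv ℝ (fun q => fderiv ℝ g q (ex 0)) p (u) + fderiv ℝ (fun q => fderiv ℝ f q (ev 1)) p (u) * fderiv ℝ g p (ex 1) + fderiv ℝ f p (ev 1) * fderiv ℝ (fun q => fderiv ℝ g q (ex 1)) p (u) + fderiv ℝ (fun q => fderiv ℝ f q (ev 2)) p (u) * fderiv ℝ g p (ex 2) + fderiv ℝ f p (ev 2) * fderiv ℝ (fun q => fderiv ℝ g q (ex 2)) p (u)) + (fderiv ℝ (fun q : V3 × V3 => B q.1 0) p (u) * (fderiv ℝ f p (ev 1) * fderiv ℝ g p (ev 2) - fderiv ℝ f p (ev 2) * fderiv ℝ g p (ev 1)) + B p.1 0 * (fderiv ℝ (fun q => fderiv ℝ f q (ev 1)) p (u) * fderiv ℝ g p (ev 2) + fderiv ℝ f p (ev 1) * fderiv ℝ (fun q => fderiv ℝ g q (ev 2)) p (u) - fderiv ℝ (fun q => fderiv ℝ f q (ev 2)) p (u) * fderiv ℝ g p (ev 1) - fderiv ℝ f p (ev 2) * fderiv ℝ (fun q => fderiv ℝ g q (ev 1)) p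 (u)) + fderiv ℝ (fun q : V3 × V3 => B q.1 1) p (u) * (fderiv ℝ f p (ev 2) * fderiv ℝ g p (ev 0) - fderiv ℝ f p (ev 0) * fderiv ℝ g p (ev 2)) + B p.1 1 * (fderiv ℝ (fun q => fderiv ℝ f q (ev 2)) p (u) * fderiv ℝ g p (ev 0) + fderiv ℝ f p (ev 2) * fderiv ℝ (fun q => fderiv ℝ g q (ev 0)) p (u) - fderiv ℝ (fun q => fderiv ℝ f q (ev 0)) p (u) * fderiv ℝ g p (ev 2) - fderiv ℝ f p (ev 0) * fderiv ℝ (fun q => fderiv ℝ g q (ev 2)) p (u)) + fderiv ℝ (fun q : V3 × V3 => B q.1 2) p (u) * (fderiv ℝ f p (ev 0) * fderiv ℝ g p (ev 1) - fderiv ℝ f p (ev 1) * fderiv ℝ g p (ev 0)) + B p.1 2 * (fderiv ℝ (fun q => fderiv ℝ f q (ev 0)) p (u) * fderiv ℝ g p (ev 1) + fderiv ℝ f p (ev 0) * fderiv ℝ (fun q => fderiv ℝ g q (ev 1)) p (u) - fderiv ℝ (fun q => fderiv ℝ f q (ev 1)) p (u) * fderiv ℝ g p (ev 0) - fderiv ℝ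 f p (ev 1) * fderiv ℝ (fun q => fderiv ℝ g q (ev 0)) p (u))) := by
  have Hf : ∀ w, HasFDerivAt (fun q => fderiv ℝ f q w) (fderiv ℝ (fun q => fderiv ℝ f q w) p) p :=
    fun w => (((contDiff_dfa hf w).differentiable (by simp)) p).hasFDerivAt
  have Hg : ∀ w, HasFDerivAt (fun q => fderiv ℝ g q w) (fderiv ℝ (fun q => fderiv ℝ g q w) p) p :=
    fun w => (((contDiff_dfa hg w).differentiable (by simp)) p).hasFDerivAt
  have HB : ∀ j : Fin 3, HasFDerivAt (fun q : V3 × V3 => B q.1 j) (fderiv ℝ (fun q : V3 × V3 => B q.1 j) p) p :=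
    fun j => ((((contDiff_pi.mp hB j).comp contDiff_fst).differentiable (by simp)) p).hasFDerivAt
  intro u
  have H := (((((Hf (ex 0)).mul (Hg (ev 0))).add ((Hf (ex 1)).mul (Hg (ev 1)))).add ((Hf (ex 2)).mul (Hg (ev 2)))).sub ((((Hf (ev 0)).mul (Hg (ex 0))).add ((Hf (ev 1)).mul (Hg (ex 1)))).add ((Hf (ev 2)).mul (Hg (ex 2))))).add ((((HB 0).mul (((Hf (ev 1)).mul (Hg (ev 2))).sub ((Hf (ev 2)).mul (Hg (ev 1))))).add ((HB 1).mul (((Hf (ev 2)).mul (Hg (ev 0))).sub ((Hf (ev 0)).mul (Hg (ev 2)))))).add ((HB 2).mul (((Hf (ev 0)).mul (Hg (ev 1))).sub ((Hf (ev 1)).mul (Hg (ev 0))))))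
  rw [mb_eq]
  erw [H.fderiv]
  simp only [ContinuousLinearMap.add_apply, ContinuousLinearMap.sub_apply,
    ContinuousLinearMap.smul_apply, smul_eq_mul, Pi.mul_apply, Pi.sub_apply]
  ring


set_option maxHeartbeats 4000000 in
/-- The Jacobi defect of the magnetized bracket equals (div B) (∇ᵥf · (∇ᵥg × ∇ᵥh)). -/
theorem magnetized_jacobi_defect (B : V3 → V3) (hB : ContDiff ℝ (⊤ : ℕ∞) B)
    (f g h : V3 × V3 → ℝ)
    (hf : ContDiff ℝ (⊤ : ℕ∞) f) (hg : ContDiff ℝ (⊤ : ℕ∞) g) (hh : ContDiff ℝ (⊤ : ℕ∞) h)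
    (p : V3 × V3) :
    mb B (mb B f g) h p + mb B (mb B g h) f p + mb B (mb B h f) g p
      = div3 B p.1 * dot3 (gradv f p) (cross3 (gradv g p) (gradv h p)) := by
  have S10 : ∀ i j : Fin 3, fderiv ℝ (fun q => fderiv ℝ f q (ex j)) p (ev i) = fderiv ℝ (fun q => fderiv ℝ f q (ev i)) p (ex j) := fun i j => D2_symm hf p (ev i) (ex j)
  have S11 : fderiv ℝ (fun q => fderiv ℝ f q (ex 0)) p (ex 1) = fderiv ℝ (fun q => fderiv ℝ f q (ex 1)) p (ex 0) := D2_symm hf p (ex 1) (ex 0)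
  have S12 : fderiv ℝ (fun q => fderiv ℝ f q (ex 0)) p (ex 2) = fderiv ℝ (fun q => fderiv ℝ f q (ex 2)) p (ex 0) := D2_symm hf p (ex 2) (ex 0)
  have S13 : fderiv ℝ (fun q => fderiv ℝ f q (ex 1)) p (ex 2) = fderiv ℝ (fun q => fderiv ℝ f q (ex 2)) p (ex 1) := D2_symm hf p (ex 2) (ex 1)
  have S14 : fderiv ℝ (fun q => fderiv ℝ f q (ev 0)) p (ev 1) = fderiv ℝ (fun q => fderiv ℝ f q (ev 1)) p (ev 0) := D2_symm hf p (ev 1) (ev 0)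
  have S15 : fderiv ℝ (fun q => fderiv ℝ f q (ev 0)) p (ev 2) = fderiv ℝ (fun q => fderiv ℝ f q (ev 2)) p (ev 0) := D2_symm hf p (ev 2) (ev 0)
  have S16 : fderiv ℝ (fun q => fderiv ℝ f q (ev 1)) p (ev 2) = fderiv ℝ (fun q => fderiv ℝ f q (ev 2)) p (ev 1) := D2_symm hf p (ev 2) (ev 1)
  have S20 : ∀ i j : Fin 3, fderiv ℝ (fun q => fderiv ℝ g q (ex j)) p (ev i) = fderiv ℝ (fun q => fderiv ℝ g q (ev i)) p (ex j) := fun i j => D2_symm hg p (ev i) (ex j)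
  have S21 : fderiv ℝ (fun q => fderiv ℝ g q (ex 0)) p (ex 1) = fderiv ℝ (fun q => fderiv ℝ g q (ex 1)) p (ex 0) := D2_symm hg p (ex 1) (ex 0)
  have S22 : fderiv ℝ (fun q => fderiv ℝ g q (ex 0)) p (ex 2) = fderiv ℝ (fun q => fderiv ℝ g q (ex 2)) p (ex 0) := D2_symm hg p (ex 2) (ex 0)
  have S23 : fderiv ℝ (fun q => fderiv ℝ g q (ex 1)) p (ex 2) = fderiv ℝ (fun q => fderiv ℝ g q (ex 2)) p (ex 1) := D2_symm hg p (ex 2) (ex 1)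
  have S24 : fderiv ℝ (fun q => fderiv ℝ g q (ev 0)) p (ev 1) = fderiv ℝ (fun q => fderiv ℝ g q (ev 1)) p (ev 0) := D2_symm hg p (ev 1) (ev 0)
  have S25 : fderiv ℝ (fun q => fderiv ℝ g q (ev 0)) p (ev 2) = fderiv ℝ (fun q => fderiv ℝ g q (ev 2)) p (ev 0) := D2_symm hg p (ev 2) (ev 0)
  have S26 : fderiv ℝ (fun q => fderiv ℝ g q (ev 1)) p (ev 2) = fderiv ℝ (fun q => fderiv ℝ g q (ev 2)) p (ev 1) := D2_symm hg p (ev 2) (ev 1)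
  have S30 : ∀ i j : Fin 3, fderiv ℝ (fun q => fderiv ℝ h q (ex j)) p (ev i) = fderiv ℝ (fun q => fderiv ℝ h q (ev i)) p (ex j) := fun i j => D2_symm hh p (ev i) (ex j)
  have S31 : fderiv ℝ (fun q => fderiv ℝ h q (ex 0)) p (ex 1) = fderiv ℝ (fun q => fderiv ℝ h q (ex 1)) p (ex 0) := D2_symm hh p (ex 1) (ex 0)
  have S32 : fderiv ℝ (fun q => fderiv ℝ h q (ex 0)) p (ex 2) = fderiv ℝ (fun q => fderiv ℝ h q (ex 2)) p (ex 0) := D2_symm hh p (ex 2) (ex 0)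
  have S33 : fderiv ℝ (fun q => fderiv ℝ h q (ex 1)) p (ex 2) = fderiv ℝ (fun q => fderiv ℝ h q (ex 2)) p (ex 1) := D2_symm hh p (ex 2) (ex 1)
  have S34 : fderiv ℝ (fun q => fderiv ℝ h q (ev 0)) p (ev 1) = fderiv ℝ (fun q => fderiv ℝ h q (ev 1)) p (ev 0) := D2_symm hh p (ev 1) (ev 0)
  have S35 : fderiv ℝ (fun q => fderiv ℝ h q (ev 0)) p (ev 2) = fderiv ℝ (fun q => fderiv ℝ h q (ev 2)) p (ev 0) := D2_symm hh p (ev 2) (ev 0)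
  have S36 : fderiv ℝ (fun q => fderiv ℝ h q (ev 1)) p (ev 2) = fderiv ℝ (fun q => fderiv ℝ h q (ev 2)) p (ev 1) := D2_symm hh p (ev 2) (ev 1)
  simp only [mb_eq B (mb B f g) h, mb_eq B (mb B g h) f, mb_eq B (mb B h f) g]
  simp only [fderiv_mb B f g hB hf hg p, fderiv_mb B g h hB hg hh p, fderiv_mb B h f hB hh hf p]
  simp only [dB_ev B hB, dB_ex B hB, mul_zero, zero_mul, add_zero, zero_add, sub_zero]
  simp only [div3, dot3, cross3, cross_apply, gradv_eq, Fin.sum_univ_three, Matrix.cons_val_zero, Matrix.cons_val_one, Matrix.head_cons, Matrix.cons_val_two, Matrix.tail_cons]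
  simp only [S10, S11, S12, S13, S14, S15, S16, S20, S21, S22, S23, S24, S25, S26, S30, S31, S32, S33, S34, S35, S36]
  ring
end
end

section
/- Let B : ℝ³ → ℝ³ be a smooth vector field and define the magnetized bracket {f, g}(x, v) = ∇ₓf · ∇ᵥg − ∇ᵥf · ∇ₓg + B(x) · (∇ᵥf × ∇ᵥg). If the Jacobi identity {{f, g}, h} + {{g, h}, f} + {{h, f}, g} = 0 holds for all smooth functions f, g, h : ℝ³ × ℝ³ → ℝ, then div B vanishes identically. -/
open scoped BigOperators
open MeasureTheory

noncomputable section

section Aux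

/-- coordinate continuous linear map on phase space (velocity part) -/
def Lv (i : Fin 3) : (V3 × V3) →L[ℝ] ℝ :=
  (ContinuousLinearMap.proj i).comp (ContinuousLinearMap.snd ℝ V3 V3)

lemma fderiv_coordv (i : Fin 3) (p : V3 × V3) :
    fderiv ℝ (fun q : V3 × V3 => q.2 i) p = Lv i := (Lv i).fderiv

lemma contDiff_coordv (i : Fin 3) : ContDiff ℝ (⊤ : ℕ∞) (fun q : V3 × V3 => q.2 i) :=
  (Lv i).contDiff

lemma gradv_coord (i : Fin 3) (p : V3 × V3) :
    gradv (fun q : V3 × V3 => q.2 i) p = Pi.single i 1 := by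
  funext j
  simp [gradv, fderiv_coordv, Lv, Pi.single_apply, eq_comm]

lemma gradx_coord (i : Fin 3) (p : V3 × V3) :
    gradx (fun q : V3 × V3 => q.2 i) p = 0 := by
  funext j
  simp [gradx, fderiv_coordv, Lv]

variable {B : V3 → V3}

lemma fderiv_Bcoord (hB : ContDiff ℝ (⊤ : ℕ∞) B) (i : Fin 3) (p : V3 × V3) (u w : V3) :
    fderiv ℝ (fun q : V3 × V3 => B q.1 i) p (u, w) =
      fderiv ℝ (fun x => B x i) p.1 u := by
  have hBi : Differentiable ℝ (fun x : V3 => B x i) := fun x =>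
    ((ContinuousLinearMap.proj i : V3 →L[ℝ] ℝ).differentiableAt).comp x
      ((hB.differentiable (by simp)) x)
  rw [show (fun q : V3 × V3 => B q.1 i) = (fun x => B x i) ∘ Prod.fst from rfl,
    fderiv_comp p (hBi p.1) differentiableAt_fst]
  simp [fderiv_fst]

lemma gradv_Bcoord (hB : ContDiff ℝ (⊤ : ℕ∞) B) (i : Fin 3) (p : V3 × V3) :
    gradv (fun q : V3 × V3 => B q.1 i) p = 0 := by
  funext j
  simp [gradv, fderiv_Bcoord hB]

lemma gradx_Bcoord (hB : ContDiff ℝ (⊤ : ℕ∞) B) (i : Fin 3) (p : V3 × V3) :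
    gradx (fun q : V3 × V3 => B q.1 i) p = fun j => pd j (fun x => B x i) p.1 := by
  funext j
  simp [gradx, fderiv_Bcoord hB, pd]

lemma mb_coord_coord (a b : Fin 3) :
    mb B (fun q : V3 × V3 => q.2 a) (fun q : V3 × V3 => q.2 b) =
      fun q => dot3 (B q.1) (cross3 (Pi.single a 1) (Pi.single b 1)) := by
  funext q
  simp [mb, pb, gradv_coord, gradx_coord, dot3, Fin.sum_univ_three]

lemma mb_Bcoord_coord (hB : ContDiff ℝ (⊤ : ℕ∞) B) (i k : Fin 3) (p : V3 × V3) :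
    mb B (fun q : V3 × V3 => B q.1 i) (fun q : V3 × V3 => q.2 k) p =
      pd k (fun x => B x i) p.1 := by
  have h0 : ∀ v : V3, cross3 (0 : V3) v = 0 := fun v => by simp [cross3]
  fin_cases k <;>
    simp [mb, pb, gradv_coord, gradx_coord, gradv_Bcoord hB, gradx_Bcoord hB, h0,
      dot3, Fin.sum_univ_three, Pi.single_apply]

lemma cross_e12 : cross3 (Pi.single (1 : Fin 3) (1:ℝ)) (Pi.single 2 1) = Pi.single 0 1 := by
  funext j; fin_cases j <;> simp [cross3, crossProduct, Pi.single_apply]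

lemma cross_e20 : cross3 (Pi.single (2 : Fin 3) (1:ℝ)) (Pi.single 0 1) = Pi.single 1 1 := by
  funext j; fin_cases j <;> simp [cross3, crossProduct, Pi.single_apply]

lemma cross_e01 : cross3 (Pi.single (0 : Fin 3) (1:ℝ)) (Pi.single 1 1) = Pi.single 2 1 := by
  funext j; fin_cases j <;> simp [cross3, crossProduct, Pi.single_apply]

end Aux

/-- If the magnetized bracket satisfies the Jacobi identity for all smooth functions,
then div B vanishes identically. -/
theorem divFree_of_magnetized_jacobi (B : V3 → V3) (hB : ContDiff ℝ (⊤ : ℕ∞) B)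
    (hJac : ∀ f g h : V3 × V3 → ℝ,
      ContDiff ℝ (⊤ : ℕ∞) f → ContDiff ℝ (⊤ : ℕ∞) g → ContDiff ℝ (⊤ : ℕ∞) h →
      ∀ p : V3 × V3, mb B (mb B f g) h p + mb B (mb B g h) f p + mb B (mb B h f) g p = 0) :
    ∀ x, div3 B x = 0 := by
  intro x
  set p : V3 × V3 := (x, 0) with hp
  have key := hJac (fun q => q.2 1) (fun q => q.2 2) (fun q => q.2 0)
    (contDiff_coordv 1) (contDiff_coordv 2) (contDiff_coordv 0) p
  rw [mb_coord_coord, mb_coord_coord, mb_coord_coord] at key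
  have h12 : (fun q : V3 × V3 => dot3 (B q.1) (cross3 (Pi.single 1 1) (Pi.single 2 1)))
      = fun q => B q.1 0 := by
    funext q; rw [cross_e12]; simp [dot3, Fin.sum_univ_three, Pi.single_apply]
  have h20 : (fun q : V3 × V3 => dot3 (B q.1) (cross3 (Pi.single 2 1) (Pi.single 0 1)))
      = fun q => B q.1 1 := by
    funext q; rw [cross_e20]; simp [dot3, Fin.sum_univ_three, Pi.single_apply]
  have h01 : (fun q : V3 × V3 => dot3 (B q.1) (cross3 (Pi.single 0 1) (Pi.single 1 1)))
      = fun q => B q.1 2 := by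
    funext q; rw [cross_e01]; simp [dot3, Fin.sum_univ_three, Pi.single_apply]
  rw [h12, h20, h01, mb_Bcoord_coord hB, mb_Bcoord_coord hB, mb_Bcoord_coord hB] at key
  have hdv : div3 B x = pd 0 (fun y => B y 0) x + pd 1 (fun y => B y 1) x + pd 2 (fun y => B y 2) x := by
    simp [div3, Fin.sum_univ_three]
  rw [hdv]
  simp only [hp] at key
  linarith
end
end

section
/- For any vector b ∈ ℝ³ and smooth functions f, g, h : ℝ³ → ℝ, the cyclic sum b · (∇(b · (∇f × ∇g)) × ∇h) + b · (∇(b · (∇g × ∇h)) × ∇f) + b · (∇(b · (∇h × ∇f)) × ∇g) vanishes identically. -/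
open scoped BigOperators
open MeasureTheory

noncomputable section

/-- Auxiliary lemmas. -/
lemma contDiff_pd (j : Fin 3) {f : V3 → ℝ} (hf : ContDiff ℝ (⊤ : ℕ∞) f) :
    ContDiff ℝ (⊤ : ℕ∞) (fun y => pd j f y) := by
  unfold pd
  exact (hf.fderiv_right (m := (⊤:ℕ∞)) (by exact_mod_cast le_top)).clm_apply contDiff_const

lemma pd_comm {f : V3 → ℝ} (hf : ContDiff ℝ (⊤ : ℕ∞) f) (i j : Fin 3) (x : V3) :
    pd i (fun y => pd j f y) x = pd j (fun y => pd i f y) x := by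
  have hd : ∀ y, HasFDerivAt f (fderiv ℝ f y) y := fun y =>
    (hf.differentiable (by simp) y).hasFDerivAt
  have hdf : DifferentiableAt ℝ (fderiv ℝ f) x :=
    ((hf.fderiv_right (m := (⊤:ℕ∞)) (by exact_mod_cast le_top)).differentiable (by simp)) x
  have h2 : HasFDerivAt (fderiv ℝ f) (fderiv ℝ (fderiv ℝ f) x) x := hdf.hasFDerivAt
  have key : ∀ v w : V3, fderiv ℝ (fun y => fderiv ℝ f y v) x w =
      fderiv ℝ (fderiv ℝ f) x w v := by
    intro v w
    rw [fderiv_clm_apply hdf (differentiableAt_const v)]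
    simp
  unfold pd
  rw [key, key]
  exact second_derivative_symmetric hd h2 _ _

lemma pd_mul {u v : V3 → ℝ} {x : V3} (i : Fin 3)
    (hu : DifferentiableAt ℝ u x) (hv : DifferentiableAt ℝ v x) :
    pd i (fun y => u y * v y) x = pd i u x * v x + u x * pd i v x := by
  unfold pd
  rw [fderiv_fun_mul hu hv]
  simp
  ring

lemma pd_add {u v : V3 → ℝ} {x : V3} (i : Fin 3)
    (hu : DifferentiableAt ℝ u x) (hv : DifferentiableAt ℝ v x) :
    pd i (fun y => u y + v y) x = pd i u x + pd i v x := by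
  unfold pd
  rw [fderiv_fun_add hu hv]; simp

lemma pd_sub {u v : V3 → ℝ} {x : V3} (i : Fin 3)
    (hu : DifferentiableAt ℝ u x) (hv : DifferentiableAt ℝ v x) :
    pd i (fun y => u y - v y) x = pd i u x - pd i v x := by
  unfold pd
  rw [fderiv_fun_sub hu hv]; simp

lemma pd_const_mul {u : V3 → ℝ} {x : V3} (c : ℝ) (i : Fin 3)
    (hu : DifferentiableAt ℝ u x) :
    pd i (fun y => c * u y) x = c * pd i u x := by
  unfold pd
  rw [fderiv_const_mul hu]; simp

lemma key_expand (b : V3) {u v : V3 → ℝ}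
    (hu : ContDiff ℝ (⊤ : ℕ∞) u) (hv : ContDiff ℝ (⊤ : ℕ∞) v) (i : Fin 3) (x : V3) :
    pd i (fun y => dot3 b (cross3 (grad3 u y) (grad3 v y))) x =
      b 0 * (pd i (fun y => pd 1 u y) x * pd 2 v x + pd 1 u x * pd i (fun y => pd 2 v y) x
           - pd i (fun y => pd 2 u y) x * pd 1 v x - pd 2 u x * pd i (fun y => pd 1 v y) x)
    + b 1 * (pd i (fun y => pd 2 u y) x * pd 0 v x + pd 2 u x * pd i (fun y => pd 0 v y) x
           - pd i (fun y => pd 0 u y) x * pd 2 v x - pd 0 u x * pd i (fun y => pd 2 v y) x)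
    + b 2 * (pd i (fun y => pd 0 u y) x * pd 1 v x + pd 0 u x * pd i (fun y => pd 1 v y) x
           - pd i (fun y => pd 1 u y) x * pd 0 v x - pd 1 u x * pd i (fun y => pd 0 v y) x) := by
  have du : ∀ j : Fin 3, ∀ y, DifferentiableAt ℝ (fun z => pd j u z) y := fun j y =>
    ((contDiff_pd j hu).differentiable (by simp)) y
  have dv : ∀ j : Fin 3, ∀ y, DifferentiableAt ℝ (fun z => pd j v z) y := fun j y =>
    ((contDiff_pd j hv).differentiable (by simp)) y
  have e1 : (fun y => dot3 b (cross3 (grad3 u y) (grad3 v y))) =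
      (fun y => b 0 * (pd 1 u y * pd 2 v y - pd 2 u y * pd 1 v y)
        + b 1 * (pd 2 u y * pd 0 v y - pd 0 u y * pd 2 v y)
        + b 2 * (pd 0 u y * pd 1 v y - pd 1 u y * pd 0 v y)) := by
    funext y
    simp [dot3, cross3, grad3, crossProduct, Fin.sum_univ_three]
  rw [e1]
  have dmul : ∀ (j k : Fin 3) y, DifferentiableAt ℝ (fun z => pd j u z * pd k v z) y :=
    fun j k y => (du j y).mul (dv k y)
  have dA : DifferentiableAt ℝ (fun y => b 0 * (pd 1 u y * pd 2 v y - pd 2 u y * pd 1 v y)) x :=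
    ((dmul 1 2 x).sub (dmul 2 1 x)).const_mul _
  have dB : DifferentiableAt ℝ (fun y => b 1 * (pd 2 u y * pd 0 v y - pd 0 u y * pd 2 v y)) x :=
    ((dmul 2 0 x).sub (dmul 0 2 x)).const_mul _
  have dC : DifferentiableAt ℝ (fun y => b 2 * (pd 0 u y * pd 1 v y - pd 1 u y * pd 0 v y)) x :=
    ((dmul 0 1 x).sub (dmul 1 0 x)).const_mul _
  rw [pd_add i (dA.fun_add dB) dC, pd_add i dA dB,
     pd_const_mul _ i ((dmul 1 2 x).fun_sub (dmul 2 1 x)),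
     pd_const_mul _ i ((dmul 2 0 x).fun_sub (dmul 0 2 x)),
     pd_const_mul _ i ((dmul 0 1 x).fun_sub (dmul 1 0 x)),
     pd_sub i (dmul 1 2 x) (dmul 2 1 x), pd_sub i (dmul 2 0 x) (dmul 0 2 x),
     pd_sub i (dmul 0 1 x) (dmul 1 0 x),
     pd_mul i (du 1 x) (dv 2 x), pd_mul i (du 2 x) (dv 1 x),
     pd_mul i (du 2 x) (dv 0 x), pd_mul i (du 0 x) (dv 2 x),
     pd_mul i (du 0 x) (dv 1 x), pd_mul i (du 1 x) (dv 0 x)]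
  ring

/-- The fB² cyclic cancellation: for a constant vector b and smooth f, g, h,
the cyclic sum b·(∇(b·(∇f × ∇g)) × ∇h) + cyc vanishes. -/
theorem fB2_cyclic_vanishes (b : V3) (f g h : V3 → ℝ)
    (hf : ContDiff ℝ (⊤ : ℕ∞) f) (hg : ContDiff ℝ (⊤ : ℕ∞) g) (hh : ContDiff ℝ (⊤ : ℕ∞) h)
    (x : V3) :
    dot3 b (cross3 (grad3 (fun y => dot3 b (cross3 (grad3 f y) (grad3 g y))) x) (grad3 h x))
      + dot3 b (cross3 (grad3 (fun y => dot3 b (cross3 (grad3 g y) (grad3 h y))) x) (grad3 f x))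
      + dot3 b (cross3 (grad3 (fun y => dot3 b (cross3 (grad3 h y) (grad3 f y))) x) (grad3 g x))
      = 0 := by
  have expand : ∀ (u v w : V3 → ℝ), dot3 b (cross3 (grad3 u x) (grad3 v x)) =
      b 0 * (pd 1 u x * pd 2 v x - pd 2 u x * pd 1 v x)
      + b 1 * (pd 2 u x * pd 0 v x - pd 0 u x * pd 2 v x)
      + b 2 * (pd 0 u x * pd 1 v x - pd 1 u x * pd 0 v x) := by
    intro u v w
    simp [dot3, cross3, grad3, crossProduct, Fin.sum_univ_three]
  rw [expand _ h f, expand _ f g, expand _ g h]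
  simp only [key_expand b hf hg, key_expand b hg hh, key_expand b hh hf]
  rw [pd_comm hf 0 1 x, pd_comm hf 0 2 x, pd_comm hf 1 2 x,
     pd_comm hg 0 1 x, pd_comm hg 0 2 x, pd_comm hg 1 2 x,
     pd_comm hh 0 1 x, pd_comm hh 0 2 x, pd_comm hh 1 2 x]
  ring
end
end
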